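/- Let σ > 0 and q > 0. Then ∫_ℝ ( -1/(2qσ²) + a²/(2(qσ²)²) ) · f(a; qσ²)^{1-q} · f(a; σ²) da = 0; that is, the expectation under N(0, σ²) of the variance component of the modified score evaluated at the surrogate variance qσ² vanishes. -/

import Mathlib

open Real MeasureTheory

/-- The density of the centered normal distribution with variance `v`:
`f(a; v) = (2πv)^(-1/2) exp(-a²/(2v))`. -/
noncomputable def normPdf (v a : ℝ) : ℝ :=
  (2 * Real.pi * v) ^ (-(1 : ℝ) / 2) * Real.exp (-a ^ 2 / (2 * v))

/-- The integral over ℝ of `(1 - a²/v) * exp(-a²/(2v))` vanishes, since the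
integrand is `v` times the derivative of `a ↦ a * exp(-a²/(2v))`. -/
lemma integral_one_sub_sq_div_mul_exp (v : ℝ) (hv : 0 < v) :
    ∫ a : ℝ, (1 - a ^ 2 / v) * Real.exp (-a ^ 2 / (2 * v)) = 0 := by
  have hb : 0 < 1 / (2 * v) := by positivity
  have hderiv : ∀ a : ℝ, HasDerivAt (fun a : ℝ => a * Real.exp (-a ^ 2 / (2 * v)))
      ((1 - a ^ 2 / v) * Real.exp (-a ^ 2 / (2 * v))) a := by
    intro a
    have h1 : HasDerivAt (fun a : ℝ => -a ^ 2 / (2 * v)) (-(2 * a) / (2 * v)) a := by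
      simpa [neg_div] using ((hasDerivAt_pow 2 a).neg.div_const (2 * v))
    have h2 : HasDerivAt (fun a : ℝ => Real.exp (-a ^ 2 / (2 * v)))
        (Real.exp (-a ^ 2 / (2 * v)) * (-(2 * a) / (2 * v))) a := h1.exp
    have h3 := (hasDerivAt_id' a).fun_mul h2
    refine h3.congr_deriv ?_
    field_simp
    ring
  have hint_sq : Integrable (fun a : ℝ => a ^ 2 * Real.exp (-(1 / (2 * v)) * a ^ 2)) := by
    have := integrable_rpow_mul_exp_neg_mul_sq hb (s := 2) (by norm_num)
    simpa [Real.rpow_two] using this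
  have hexp : Integrable (fun a : ℝ => Real.exp (-(1 / (2 * v)) * a ^ 2)) :=
    integrable_exp_neg_mul_sq hb
  have harg : ∀ a : ℝ, -a ^ 2 / (2 * v) = -(1 / (2 * v)) * a ^ 2 := by
    intro a; field_simp
  have hint' : Integrable (fun a : ℝ => (1 - a ^ 2 / v) * Real.exp (-a ^ 2 / (2 * v))) := by
    have : (fun a : ℝ => (1 - a ^ 2 / v) * Real.exp (-a ^ 2 / (2 * v))) =
        fun a : ℝ => Real.exp (-(1 / (2 * v)) * a ^ 2) -
          (1 / v) * (a ^ 2 * Real.exp (-(1 / (2 * v)) * a ^ 2)) := by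
      funext a
      rw [← harg a]
      ring
    rw [this]
    exact hexp.sub (hint_sq.const_mul _)
  have hint : Integrable (fun a : ℝ => a * Real.exp (-a ^ 2 / (2 * v))) := by
    have := integrable_mul_exp_neg_mul_sq hb
    refine this.congr ?_
    filter_upwards with a
    rw [harg a]
  exact MeasureTheory.integral_eq_zero_of_hasDerivAt_of_integrable hderiv hint' hint

/-- For `σ > 0` and `q > 0`, the expectation under `N(0, σ²)` of the variance
component of the modified score evaluated at the surrogate variance `qσ²`
vanishes: `∫ (-1/(2qσ²) + a²/(2(qσ²)²)) f(a; qσ²)^(1-q) f(a; σ²) da = 0`. -/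
theorem integral_variance_modified_score_eq_zero (σ q : ℝ) (hσ : 0 < σ) (hq : 0 < q) :
    ∫ a : ℝ, (-1 / (2 * (q * σ ^ 2)) + a ^ 2 / (2 * (q * σ ^ 2) ^ 2)) *
        normPdf (q * σ ^ 2) a ^ (1 - q) * normPdf (σ ^ 2) a = 0 := by
  set v : ℝ := q * σ ^ 2 with hv_def
  have hv : 0 < v := by positivity
  have h2πv : 0 < 2 * Real.pi * v := by positivity
  have h2πσ : 0 < 2 * Real.pi * σ ^ 2 := by positivity
  set K : ℝ := (2 * Real.pi * v) ^ ((-(1 : ℝ) / 2) * (1 - q)) *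
      (2 * Real.pi * σ ^ 2) ^ (-(1 : ℝ) / 2) with hK_def
  have key : ∀ a : ℝ, (-1 / (2 * v) + a ^ 2 / (2 * v ^ 2)) *
        normPdf v a ^ (1 - q) * normPdf (σ ^ 2) a =
      (-(1 / (2 * v)) * K) * ((1 - a ^ 2 / v) * Real.exp (-a ^ 2 / (2 * v))) := by
    intro a
    have hpow : normPdf v a ^ (1 - q) =
        (2 * Real.pi * v) ^ ((-(1 : ℝ) / 2) * (1 - q)) *
          Real.exp ((-a ^ 2 / (2 * v)) * (1 - q)) := by
      rw [normPdf, Real.mul_rpow (by positivity) (Real.exp_pos _).le,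
        ← Real.rpow_mul h2πv.le, ← Real.exp_mul]
    have hexp : Real.exp ((-a ^ 2 / (2 * v)) * (1 - q)) * Real.exp (-a ^ 2 / (2 * σ ^ 2)) =
        Real.exp (-a ^ 2 / (2 * v)) := by
      rw [← Real.exp_add]
      congr 1
      rw [hv_def]
      field_simp
      ring
    rw [hpow, normPdf]
    calc (-1 / (2 * v) + a ^ 2 / (2 * v ^ 2)) *
          ((2 * Real.pi * v) ^ ((-(1 : ℝ) / 2) * (1 - q)) *
            Real.exp ((-a ^ 2 / (2 * v)) * (1 - q))) *
          ((2 * Real.pi * σ ^ 2) ^ (-(1 : ℝ) / 2) * Real.exp (-a ^ 2 / (2 * σ ^ 2)))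
        = (-1 / (2 * v) + a ^ 2 / (2 * v ^ 2)) * K *
            (Real.exp ((-a ^ 2 / (2 * v)) * (1 - q)) * Real.exp (-a ^ 2 / (2 * σ ^ 2))) := by
          rw [hK_def]; ring
      _ = (-1 / (2 * v) + a ^ 2 / (2 * v ^ 2)) * K * Real.exp (-a ^ 2 / (2 * v)) := by
          rw [hexp]
      _ = (-(1 / (2 * v)) * K) * ((1 - a ^ 2 / v) * Real.exp (-a ^ 2 / (2 * v))) := by
          field_simp
          ring
  calc ∫ a : ℝ, (-1 / (2 * v) + a ^ 2 / (2 * v ^ 2)) *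
        normPdf v a ^ (1 - q) * normPdf (σ ^ 2) a
      = ∫ a : ℝ, (-(1 / (2 * v)) * K) *
          ((1 - a ^ 2 / v) * Real.exp (-a ^ 2 / (2 * v))) := by
        exact MeasureTheory.integral_congr_ae (Filter.Eventually.of_forall key)
    _ = (-(1 / (2 * v)) * K) *
          ∫ a : ℝ, (1 - a ^ 2 / v) * Real.exp (-a ^ 2 / (2 * v)) :=
        MeasureTheory.integral_const_mul _ _
    _ = 0 := by rw [integral_one_sub_sq_div_mul_exp v hv, mul_zero]
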